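/- For all integers n ≥ 3 and k ≥ 3, there exists a unique real number t₀ with t₁ < t₀ < k − 1 and f_{n,k}(t₀) = 0. Moreover t₀ > 0, f_{n,k}(t) > 0 for every real t > t₀ (so t₀ is the largest real root of f_{n,k}), and f'_{n,k}(t₀) > 0 (so t₀ is a simple root). -/

import Mathlib

/-- The cubic polynomial `f_{n,k}` from Theorem 1.4 of the paper. -/
noncomputable def fnk (n k : ℤ) (t : ℝ) : ℝ :=
  (n : ℝ) ^ 4 * t ^ 3
    - (n : ℝ) ^ 2 * (((k : ℝ) - 1) * (n : ℝ) ^ 2 - 2 * ((k : ℝ) + 2) * (n : ℝ)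
        + 2 * ((k : ℝ) + 2)) * t ^ 2
    - ((n : ℝ) - 1) * (3 * (n : ℝ) - ((k : ℝ) + 2)) * (((k : ℝ) - 1) * (n : ℝ)
        - ((k : ℝ) + 2)) * t
    - ((n : ℝ) - 1) * ((n : ℝ) - 2) ^ 2

/-- The derivative `f'_{n,k}` of the cubic `f_{n,k}`. -/
noncomputable def fnk' (n k : ℤ) (t : ℝ) : ℝ :=
  3 * (n : ℝ) ^ 4 * t ^ 2
    - 2 * (n : ℝ) ^ 2 * (((k : ℝ) - 1) * (n : ℝ) ^ 2 - 2 * ((k : ℝ) + 2) * (n : ℝ)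
        + 2 * ((k : ℝ) + 2)) * t
    - ((n : ℝ) - 1) * (3 * (n : ℝ) - ((k : ℝ) + 2)) * (((k : ℝ) - 1) * (n : ℝ)
        - ((k : ℝ) + 2))

/-- The quantity `t₁ = (n² + 2(n−1)(k−6))/(2n²)`. -/
noncomputable def tOne (n k : ℤ) : ℝ :=
  ((n : ℝ) ^ 2 + 2 * ((n : ℝ) - 1) * ((k : ℝ) - 6)) / (2 * (n : ℝ) ^ 2)

/-- Real-parameter version of the cubic. -/
noncomputable def FF (x y t : ℝ) : ℝ :=
  x ^ 4 * t ^ 3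
    - x ^ 2 * ((y - 1) * x ^ 2 - 2 * (y + 2) * x + 2 * (y + 2)) * t ^ 2
    - (x - 1) * (3 * x - (y + 2)) * ((y - 1) * x - (y + 2)) * t
    - (x - 1) * (x - 2) ^ 2

/-- Real-parameter version of the derivative. -/
noncomputable def FF' (x y t : ℝ) : ℝ :=
  3 * x ^ 4 * t ^ 2
    - 2 * x ^ 2 * ((y - 1) * x ^ 2 - 2 * (y + 2) * x + 2 * (y + 2)) * t
    - (x - 1) * (3 * x - (y + 2)) * ((y - 1) * x - (y + 2))

lemma FF_hasDeriv (x y t : ℝ) : HasDerivAt (FF x y) (FF' x y t) t := by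
  have h3 := hasDerivAt_pow 3 t
  have h2 := hasDerivAt_pow 2 t
  have h1 := hasDerivAt_id t
  have H := (((h3.const_mul (x ^ 4)).sub
      (h2.const_mul (x ^ 2 * ((y - 1) * x ^ 2 - 2 * (y + 2) * x + 2 * (y + 2))))).sub
      (h1.const_mul ((x - 1) * (3 * x - (y + 2)) * ((y - 1) * x - (y + 2))))).sub_const
      ((x - 1) * (x - 2) ^ 2)
  have hfun : FF x y = (fun s : ℝ => x ^ 4 * s ^ 3
      - x ^ 2 * ((y - 1) * x ^ 2 - 2 * (y + 2) * x + 2 * (y + 2)) * s ^ 2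
      - (x - 1) * (3 * x - (y + 2)) * ((y - 1) * x - (y + 2)) * s
      - (x - 1) * (x - 2) ^ 2) := by
    funext s; simp [FF]
  rw [hfun]
  refine H.congr_deriv ?_
  simp [FF']; ring

lemma FF_cont (x y : ℝ) : Continuous (FF x y) := by
  unfold FF; fun_prop

/-- `f(t₁) < 0`, cleared of denominators. -/
lemma L1 (x y : ℝ) (hx : 3 ≤ x) (hy : 3 ≤ y) :
    x^4*(x^2+2*(x-1)*(y-6))^3
      - 2*x^4*((y-1)*x^2 - 2*(y+2)*x + 2*(y+2))*(x^2+2*(x-1)*(y-6))^2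
      - 4*x^4*((x-1)*(3*x-(y+2))*((y-1)*x-(y+2)))*(x^2+2*(x-1)*(y-6))
      - 8*x^6*((x-1)*(x-2)^2) < 0 := by
  have hu : (0:ℝ) ≤ x - 3 := by linarith
  have hv : (0:ℝ) ≤ y - 3 := by linarith
  linarith [mul_nonneg (pow_nonneg hu 0) (pow_nonneg hv 1), mul_nonneg (pow_nonneg hu 0) (pow_nonneg hv 2), mul_nonneg (pow_nonneg hu 0) (pow_nonneg hv 3), mul_nonneg (pow_nonneg hu 1) (pow_nonneg hv 0), mul_nonneg (pow_nonneg hu 1) (pow_nonneg hv 1), mul_nonneg (pow_nonneg hu 1) (pow_nonneg hv 2), mul_nonneg (pow_nonneg hu 1) (pow_nonneg hv 3), mul_nonneg (pow_nonneg hu 2) (pow_nonneg hv 0), mul_nonneg (pow_nonneg hu 2) (pow_nonneg hv 1), mul_nonneg (pow_nonneg hu 2) (pow_nonneg hv 2), mul_nonneg (pow_nonneg hu 2) (pow_nonneg hv 3), mul_nonneg (pow_nonneg hu 3) (pow_nonneg hv 0), mul_nonneg (pow_nonneg hu 3) (pow_nonneg hv 1), mul_nonneg (pow_nonneg hu 3)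 (pow_nonneg hv 2), mul_nonneg (pow_nonneg hu 3) (pow_nonneg hv 3), mul_nonneg (pow_nonneg hu 4) (pow_nonneg hv 0), mul_nonneg (pow_nonneg hu 4) (pow_nonneg hv 1), mul_nonneg (pow_nonneg hu 4) (pow_nonneg hv 2), mul_nonneg (pow_nonneg hu 4) (pow_nonneg hv 3), mul_nonneg (pow_nonneg hu 5) (pow_nonneg hv 0), mul_nonneg (pow_nonneg hu 5) (pow_nonneg hv 1), mul_nonneg (pow_nonneg hu 5) (pow_nonneg hv 2), mul_nonneg (pow_nonneg hu 5) (pow_nonneg hv 3), mul_nonneg (pow_nonneg hu 6) (pow_nonneg hv 0), mul_nonneg (pow_nonneg hu 6) (pow_nonneg hv 1), mul_nonneg (pow_nonneg hu 6) (pow_nonneg hv 2), mul_nonneg (pow_nonneg hu 6) (pow_nonneg hv 3), mul_nonneg (pow_nonneg hu 7) (pow_nonneg hv 0), mul_nonneg (pow_nonneg hu 7) (pow_nonneg hv 1), mul_nonneg (pow_nonneg hu 7) (pow_nonneg hv 2), mul_nonneg (pow_nonneg hu 7) (pow_nonneg hv 3), mul_nonneg (pow_nonneg hu 8) (pow_nonneg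 hv 0), mul_nonneg (pow_nonneg hu 8) (pow_nonneg hv 1), mul_nonneg (pow_nonneg hu 8) (pow_nonneg hv 2), mul_nonneg (pow_nonneg hu 8) (pow_nonneg hv 3), mul_nonneg (pow_nonneg hu 9) (pow_nonneg hv 0), mul_nonneg (pow_nonneg hu 9) (pow_nonneg hv 1), mul_nonneg (pow_nonneg hu 9) (pow_nonneg hv 2), mul_nonneg (pow_nonneg hu 10) (pow_nonneg hv 0), mul_nonneg (pow_nonneg hu 10) (pow_nonneg hv 1)]

/-- `f(k−1) > 0`. -/
lemma L2 (x y : ℝ) (hx : 3 ≤ x) (hy : 3 ≤ y) : 0 < FF x y (y - 1) := by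
  have hu : (0:ℝ) ≤ x - 3 := by linarith
  have hv : (0:ℝ) ≤ y - 3 := by linarith
  unfold FF
  linarith [mul_nonneg (pow_nonneg hu 0) (pow_nonneg hv 1), mul_nonneg (pow_nonneg hu 0) (pow_nonneg hv 2), mul_nonneg (pow_nonneg hu 0) (pow_nonneg hv 3), mul_nonneg (pow_nonneg hu 1) (pow_nonneg hv 0), mul_nonneg (pow_nonneg hu 1) (pow_nonneg hv 1), mul_nonneg (pow_nonneg hu 1) (pow_nonneg hv 2), mul_nonneg (pow_nonneg hu 1) (pow_nonneg hv 3), mul_nonneg (pow_nonneg hu 2) (pow_nonneg hv 0), mul_nonneg (pow_nonneg hu 2) (pow_nonneg hv 1), mul_nonneg (pow_nonneg hu 2) (pow_nonneg hv 2), mul_nonneg (pow_nonneg hu 2) (pow_nonneg hv 3), mul_nonneg (pow_nonneg hu 3) (pow_nonneg hv 0), mul_nonneg (pow_nonneg hu 3) (pow_nonneg hv 1), mul_nonneg (pow_nonneg hu 3) (pow_nonneg hv 2), mul_nonneg (pow_nonneg hu 3) (pow_nonneg hv 3)]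

set_option maxHeartbeats 1000000 in
/-- Claim A: on `[t₁, 0]` the cubic is negative. -/
lemma LA (x y t : ℝ) (hx : 3 ≤ x) (hy : 3 ≤ y)
    (h1 : x^2 + 2*(x-1)*(y-6) ≤ 2*x^2*t) (h0 : t ≤ 0) : FF x y t < 0 := by
  have hu : (0:ℝ) ≤ x - 3 := by linarith
  have hv : (0:ℝ) ≤ y - 3 := by linarith
  have hy6 : y ≤ 6 := by nlinarith
  unfold FF
  nlinarith [mul_nonneg hu hv, sq_nonneg t, sq_nonneg (x*t), mul_nonneg (mul_nonneg hu hu) hv,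
    mul_nonneg hv (neg_nonneg.2 h0), mul_nonneg hu (neg_nonneg.2 h0),
    mul_nonneg (mul_nonneg hu hv) (neg_nonneg.2 h0),
    mul_nonneg (sq_nonneg t) hu, mul_nonneg (sq_nonneg t) hv,
    mul_nonneg (sq_nonneg (x*t)) hu, mul_nonneg (sq_nonneg (x*t)) hv,
    sq_nonneg (x*t+1), sq_nonneg (x^2*t), mul_nonneg (neg_nonneg.2 h0) (sub_nonneg.2 hy6),
    sq_nonneg (2*x^2*t - x^2 - 2*(x-1)*(y-6))]

set_option maxHeartbeats 1000000 in
/-- Claim B: where `t ≥ t₁`, `t > 0` and `f' ≤ 0`, the auxiliary quadratic `Q` is positive. -/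
lemma LB (x y t : ℝ) (hx : 3 ≤ x) (hy : 3 ≤ y)
    (h1 : x^2 + 2*(x-1)*(y-6) ≤ 2*x^2*t) (h0 : 0 < t)
    (hfp : FF' x y t ≤ 0) :
    0 < x^2*((y-1)*x^2 - 2*(y+2)*x + 2*(y+2))*t^2
      + 2*(x-1)*(3*x-(y+2))*((y-1)*x-(y+2))*t + 3*(x-1)*(x-2)^2 := by
  have hu : (0:ℝ) ≤ x - 3 := by linarith
  have hv : (0:ℝ) ≤ y - 3 := by linarith
  unfold FF' at hfp
  nlinarith [mul_nonneg hu hv, mul_nonneg hu h0.le, mul_nonneg hv h0.le,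
    mul_nonneg (mul_nonneg hu hv) h0.le, mul_nonneg (sub_nonneg.2 h1) h0.le,
    mul_nonneg (sub_nonneg.2 h1) hu, mul_nonneg (sub_nonneg.2 h1) hv,
    mul_nonneg (neg_nonneg.2 hfp) h0.le, mul_nonneg (neg_nonneg.2 hfp) hu,
    mul_nonneg (neg_nonneg.2 hfp) hv,
    sq_nonneg (2*x^2*t - x^2 - 2*(x-1)*(y-6)), sq_nonneg t, sq_nonneg (x*t-1)]

/-- Key lemma M: to the right of `t₁`, wherever `f ≥ 0` we have `f' > 0`. -/
lemma LM (x y t : ℝ) (hx : 3 ≤ x) (hy : 3 ≤ y)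
    (h1 : x^2 + 2*(x-1)*(y-6) ≤ 2*x^2*t) (hf : 0 ≤ FF x y t) : 0 < FF' x y t := by
  by_contra h
  push_neg at h
  rcases le_or_gt t 0 with h0 | h0
  · exact absurd hf (not_le.2 (LA x y t hx hy h1 h0))
  · have hQ := LB x y t hx hy h1 h0 h
    have hid : 3 * FF x y t = t * FF' x y t
        - (x^2*((y-1)*x^2 - 2*(y+2)*x + 2*(y+2))*t^2
          + 2*(x-1)*(3*x-(y+2))*((y-1)*x-(y+2))*t + 3*(x-1)*(x-2)^2) := by
      unfold FF FF'; ring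
    nlinarith [mul_nonpos_of_nonneg_of_nonpos h0.le h]

/-- Main result, real-parameter version. -/
lemma main_real (x y : ℝ) (hx : 3 ≤ x) (hy : 3 ≤ y) :
    ∃ t₀ : ℝ, ((x^2 + 2*(x-1)*(y-6))/(2*x^2) < t₀ ∧ t₀ < y - 1 ∧ FF x y t₀ = 0) ∧
      (∀ t : ℝ, (x^2 + 2*(x-1)*(y-6))/(2*x^2) < t → t < y - 1 → FF x y t = 0 → t = t₀) ∧
      0 < t₀ ∧ (∀ t : ℝ, t₀ < t → 0 < FF x y t) ∧ 0 < FF' x y t₀ := by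
  have hx0 : (0:ℝ) < x := by linarith
  have h2x : (0:ℝ) < 2*x^2 := by positivity
  set a : ℝ := (x^2 + 2*(x-1)*(y-6))/(2*x^2) with ha
  set b : ℝ := y - 1 with hb
  have ha_mul : 2*x^2*a = x^2 + 2*(x-1)*(y-6) := by
    rw [ha]; field_simp
  -- f a < 0
  have hfa : FF x y a < 0 := by
    have h1 := L1 x y hx hy
    have hkey : FF x y a * (8*x^6) =
        x^4*(x^2+2*(x-1)*(y-6))^3
          - 2*x^4*((y-1)*x^2 - 2*(y+2)*x + 2*(y+2))*(x^2+2*(x-1)*(y-6))^2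
          - 4*x^4*((x-1)*(3*x-(y+2))*((y-1)*x-(y+2)))*(x^2+2*(x-1)*(y-6))
          - 8*x^6*((x-1)*(x-2)^2) := by
      unfold FF; rw [ha]; field_simp; ring
    nlinarith [pow_pos hx0 6]
  have hfb : 0 < FF x y b := L2 x y hx hy
  have hab : a < b := by
    rw [ha, hb, div_lt_iff₀ h2x]
    nlinarith [mul_nonneg (by linarith : (0:ℝ) ≤ x-3) (by linarith : (0:ℝ) ≤ y-3), sq_nonneg x, sq_nonneg (x-1)]
  have hcont : Continuous (FF x y) := FF_cont x y
  -- tOne condition in product form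
  have hM : ∀ t : ℝ, a ≤ t → 0 ≤ FF x y t → 0 < FF' x y t := by
    intro t hat hft
    apply LM x y t hx hy _ hft
    calc x^2 + 2*(x-1)*(y-6) = 2*x^2*a := ha_mul.symm
    _ ≤ 2*x^2*t := by nlinarith
  -- the root set
  set S : Set ℝ := Set.Icc a b ∩ {t | 0 ≤ FF x y t} with hS
  have hSclosed : IsClosed S := isClosed_Icc.inter (isClosed_le continuous_const hcont)
  have hSne : S.Nonempty := ⟨b, ⟨le_of_lt hab, le_rfl⟩, hfb.le⟩
  have hSbdd : BddBelow S := (bddBelow_Icc (a := b) (b := a)).mono Set.inter_subset_left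
  set t₀ : ℝ := sInf S with ht₀
  have ht₀S : t₀ ∈ S := hSclosed.csInf_mem hSne hSbdd
  obtain ⟨⟨hat₀, ht₀b⟩, hft₀⟩ := ht₀S
  have ht₀le : ∀ t ∈ S, t₀ ≤ t := fun t ht => csInf_le hSbdd ht
  -- f t₀ = 0
  have hft₀' : 0 ≤ FF x y t₀ := hft₀
  have hf0 : FF x y t₀ = 0 := by
    rcases lt_or_eq_of_le hft₀' with hpos | h0
    · exfalso
      have hat₀' : a < t₀ := lt_of_le_of_ne hat₀ (by intro h; rw [h] at hfa; linarith)
      have := intermediate_value_Ioo hat₀ hcont.continuousOn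
      have h0mem : (0:ℝ) ∈ Set.Ioo (FF x y a) (FF x y t₀) := ⟨hfa, hpos⟩
      obtain ⟨s, hs, hfs⟩ := this h0mem
      have hsS : s ∈ S := ⟨⟨hs.1.le, le_trans hs.2.le ht₀b⟩, hfs.ge⟩
      exact absurd (ht₀le s hsS) (not_le.2 hs.2)
    · exact h0.symm
  have hat₀' : a < t₀ := lt_of_le_of_ne hat₀ (by intro h; rw [← h] at hf0; linarith)
  have ht₀b' : t₀ < b := lt_of_le_of_ne ht₀b (by intro h; rw [h] at hf0; linarith)
  -- f' > 0 on [t₀, ∞)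
  have hM' : ∀ t : ℝ, t₀ ≤ t → 0 < FF' x y t := by
    by_contra h
    push_neg at h
    obtain ⟨u, hu1, hu2⟩ := h
    set T : Set ℝ := Set.Ici t₀ ∩ {t | FF' x y t ≤ 0} with hT
    have hTclosed : IsClosed T := isClosed_Ici.inter
      (isClosed_le (by unfold FF'; fun_prop) continuous_const)
    have hTne : T.Nonempty := ⟨u, hu1, hu2⟩
    have hTbdd : BddBelow T := ⟨t₀, fun t ht => ht.1⟩
    have hwT : sInf T ∈ T := hTclosed.csInf_mem hTne hTbdd
    set w : ℝ := sInf T with hw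
    have hfw' : FF' x y w ≤ 0 := hwT.2
    have ht₀w : t₀ < w := by
      rcases lt_or_eq_of_le (Set.mem_Ici.1 hwT.1) with h' | h'
      · exact h'
      · exfalso
        have := hM t₀ hat₀'.le hf0.ge
        rw [← h'] at hfw'; linarith
    -- f strictly increasing on [t₀, w]
    have hmono : StrictMonoOn (FF x y) (Set.Icc t₀ w) := by
      apply strictMonoOn_of_deriv_pos (convex_Icc t₀ w) hcont.continuousOn
      intro s hs
      rw [interior_Icc] at hs
      rw [(FF_hasDeriv x y s).deriv]
      by_contra hns
      push_neg at hns
      have hsT : s ∈ T := ⟨hs.1.le, hns⟩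
      exact absurd (csInf_le hTbdd hsT) (not_le.2 hs.2)
    have hfwpos : 0 < FF x y w := by
      have := hmono (Set.left_mem_Icc.2 ht₀w.le) (Set.right_mem_Icc.2 ht₀w.le) ht₀w
      rw [hf0] at this; exact this
    have := hM w (by linarith) hfwpos.le
    linarith
  -- f strictly increasing on [t₀, ∞)
  have hmono : StrictMonoOn (FF x y) (Set.Ici t₀) := by
    apply strictMonoOn_of_deriv_pos (convex_Ici t₀) hcont.continuousOn
    intro s hs
    rw [interior_Ici] at hs
    rw [(FF_hasDeriv x y s).deriv]
    exact hM' s hs.le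
  have hpos : ∀ t : ℝ, t₀ < t → 0 < FF x y t := by
    intro t ht
    have := hmono (Set.mem_Ici.2 le_rfl) (Set.mem_Ici.2 ht.le) ht
    rw [hf0] at this; exact this
  -- t₀ > 0
  have ht₀pos : 0 < t₀ := by
    by_contra h
    push_neg at h
    have hf0' : FF x y 0 < 0 := by
      unfold FF
      nlinarith [sq_nonneg (x-2)]
    rcases lt_or_eq_of_le h with h' | h'
    · exact absurd (hpos 0 h') (not_lt.2 hf0'.le)
    · rw [h'] at hf0; rw [hf0] at hf0'; linarith
  refine ⟨t₀, ⟨hat₀', ht₀b', hf0⟩, ?_, ht₀pos, hpos, hM' t₀ le_rfl⟩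
  intro t hat htb hft
  have htS : t ∈ S := ⟨⟨hat.le, htb.le⟩, hft.ge⟩
  have := ht₀le t htS
  rcases lt_or_eq_of_le this with h' | h'
  · exact absurd (hpos t h') (by rw [hft]; exact lt_irrefl 0)
  · exact h'.symm

theorem largest_root_of_fnk (n k : ℤ) (hn : 3 ≤ n) (hk : 3 ≤ k) :
    ∃ t₀ : ℝ, (tOne n k < t₀ ∧ t₀ < (k : ℝ) - 1 ∧ fnk n k t₀ = 0) ∧
      (∀ t : ℝ, tOne n k < t → t < (k : ℝ) - 1 → fnk n k t = 0 → t = t₀) ∧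
      0 < t₀ ∧ (∀ t : ℝ, t₀ < t → 0 < fnk n k t) ∧ 0 < fnk' n k t₀ := by
  have hx : (3:ℝ) ≤ (n:ℝ) := by exact_mod_cast hn
  have hy : (3:ℝ) ≤ (k:ℝ) := by exact_mod_cast hk
  have hfe : fnk n k = FF (n:ℝ) (k:ℝ) := rfl
  have hfe' : fnk' n k = FF' (n:ℝ) (k:ℝ) := rfl
  have hte : tOne n k = ((n:ℝ)^2 + 2*((n:ℝ)-1)*((k:ℝ)-6))/(2*(n:ℝ)^2) := rfl
  rw [hfe, hfe', hte]
  exact main_real (n:ℝ) (k:ℝ) hx hy
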